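/- For 1 ≤ p, q < ∞ and any K > 0, the Mazur map φ_{p,q} : ℓ_p → ℓ_q defined by φ_{p,q}(x) = ‖x‖_p^{1−p/q}·(sign(x_i)|x_i|^{p/q})_i is a positively homogeneous bijection of the closed ball of radius K in ℓ_p onto the closed ball of radius K in ℓ_q, with inverse φ_{q,p}, and it is a uniform homeomorphism between these balls. -/

import Mathlib

set_option maxHeartbeats 1000000
open Real
open scoped NNReal ENNReal

noncomputable def sgp (r a : ℝ) : ℝ := Real.sign a * |a| ^ r

lemma sgp_zero (r : ℝ) : sgp r 0 = 0 := by simp [sgp, Real.sign_zero]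

lemma sgp_neg (r a : ℝ) : sgp r (-a) = - sgp r a := by
  rcases lt_trichotomy a 0 with h | h | h
  · simp [sgp, Real.sign_of_neg h, Real.sign_of_pos (by linarith : (0:ℝ) < -a), abs_neg]
  · simp [h, sgp, Real.sign_zero]
  · simp [sgp, Real.sign_of_pos h, Real.sign_of_neg (by linarith : -a < 0), abs_neg]

lemma sgp_of_nonneg {a : ℝ} (ha : 0 ≤ a) {r : ℝ} (hr : 0 < r) : sgp r a = a ^ r := by
  rcases eq_or_lt_of_le ha with h | h
  · simp [← h, sgp_zero, Real.zero_rpow hr.ne']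
  · simp [sgp, Real.sign_of_pos h, abs_of_pos h]

lemma abs_sgp (r a : ℝ) (hr : 0 < r) : |sgp r a| = |a| ^ r := by
  rcases lt_trichotomy a 0 with h | h | h
  · rw [sgp, Real.sign_of_neg h]
    rw [abs_of_nonpos (by nlinarith [Real.rpow_nonneg (abs_nonneg a) r] : -1 * |a| ^ r ≤ 0)]
    ring
  · simp [h, sgp_zero, Real.zero_rpow hr.ne']
  · rw [sgp, Real.sign_of_pos h, one_mul, abs_of_nonneg (Real.rpow_nonneg (abs_nonneg a) r)]

lemma rpow_sub_rpow_le (r : ℝ) (hr : 1 ≤ r) {a b : ℝ} (hb : 0 ≤ b) (hba : b ≤ a) :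
    a ^ r - b ^ r ≤ r * a ^ (r - 1) * (a - b) := by
  have ha : 0 ≤ a := hb.trans hba
  rcases eq_or_lt_of_le ha with h | h
  · have hb0 : b = 0 := le_antisymm (h ▸ hba) hb
    simp [← h, hb0, Real.zero_rpow (by linarith : r ≠ 0)]
  · have hs : -1 ≤ b / a - 1 := by
      have : 0 ≤ b / a := div_nonneg hb h.le
      linarith
    have key := one_add_mul_self_le_rpow_one_add hs hr
    rw [add_sub_cancel] at key
    have hdiv : (b / a) ^ r = b ^ r / a ^ r := Real.div_rpow hb h.le r
    rw [hdiv] at key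
    have har : 0 < a ^ r := Real.rpow_pos_of_pos h r
    have key2 : (1 + r * (b / a - 1)) * a ^ r ≤ b ^ r := (le_div_iff₀ har).mp key
    have hexp : a ^ r = a ^ (r - 1) * a := by
      rw [← Real.rpow_add_one h.ne' (r - 1)]; ring_nf
    have heq : a ^ r * (1 - b / a) = a ^ (r - 1) * (a - b) := by
      rw [hexp]; field_simp
    calc a ^ r - b ^ r ≤ a ^ r - (1 + r * (b / a - 1)) * a ^ r := by linarith
      _ = r * (a ^ r * (1 - b / a)) := by ring
      _ = r * a ^ (r - 1) * (a - b) := by rw [heq]; ring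

lemma rpow_le_rpow_sub_one_mul (r : ℝ) (hr : 1 ≤ r) {a c : ℝ} (ha : 0 ≤ a) (hac : a ≤ c) :
    a ^ r ≤ a ^ (r - 1) * c := by
  rcases eq_or_lt_of_le ha with h | h
  · rw [← h, Real.zero_rpow (by linarith : r ≠ 0)]
    exact mul_nonneg (Real.rpow_nonneg (le_refl 0) _) (le_trans ha hac)
  · have : a ^ r = a ^ (r - 1) * a := by
      rw [← Real.rpow_add_one h.ne' (r - 1)]; ring_nf
    rw [this]
    exact mul_le_mul_of_nonneg_left hac (Real.rpow_nonneg h.le _)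

lemma sgp_diff_le (r : ℝ) (hr : 1 ≤ r) (a b : ℝ) :
    |sgp r a - sgp r b| ≤ r * (|a| ^ (r - 1) + |b| ^ (r - 1)) * |a - b| := by
  have hr0 : (0:ℝ) < r := by linarith
  -- nonneg ordered case
  have honn : ∀ a b : ℝ, 0 ≤ b → b ≤ a →
      |sgp r a - sgp r b| ≤ r * (|a| ^ (r - 1) + |b| ^ (r - 1)) * |a - b| := by
    intro a b hb hba
    have ha : 0 ≤ a := hb.trans hba
    rw [sgp_of_nonneg ha hr0, sgp_of_nonneg hb hr0, abs_of_nonneg ha, abs_of_nonneg hb,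
      abs_of_nonneg (by linarith : (0:ℝ) ≤ a - b),
      abs_of_nonneg (by linarith [Real.rpow_le_rpow hb hba hr0.le] : (0:ℝ) ≤ a ^ r - b ^ r)]
    calc a ^ r - b ^ r ≤ r * a ^ (r - 1) * (a - b) := rpow_sub_rpow_le r hr hb hba
      _ ≤ r * (a ^ (r - 1) + b ^ (r - 1)) * (a - b) := by
          have h1 := Real.rpow_nonneg hb (r - 1)
          nlinarith [mul_nonneg (mul_nonneg hr0.le h1) (by linarith : (0:ℝ) ≤ a - b)]
  -- mixed case
  have hmx : ∀ a b : ℝ, 0 ≤ a → b ≤ 0 →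
      |sgp r a - sgp r b| ≤ r * (|a| ^ (r - 1) + |b| ^ (r - 1)) * |a - b| := by
    intro a b ha hb
    have hnb : 0 ≤ -b := by linarith
    have h1 : sgp r b = -((-b) ^ r) := by
      rw [show b = -(-b) by ring, sgp_neg, sgp_of_nonneg hnb hr0]; ring_nf
    rw [sgp_of_nonneg ha hr0, h1, sub_neg_eq_add, abs_of_nonneg ha, abs_of_nonpos hb,
      abs_of_nonneg (by linarith : (0:ℝ) ≤ a - b),
      abs_of_nonneg (by positivity : (0:ℝ) ≤ a ^ r + (-b) ^ r)]
    have e1 : a ^ r ≤ a ^ (r - 1) * (a - b) := rpow_le_rpow_sub_one_mul r hr ha (by linarith)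
    have e2 : (-b) ^ r ≤ (-b) ^ (r - 1) * (a - b) := rpow_le_rpow_sub_one_mul r hr hnb (by linarith)
    have h2 : (0:ℝ) ≤ a ^ (r-1) := Real.rpow_nonneg ha _
    have h3 : (0:ℝ) ≤ (-b) ^ (r-1) := Real.rpow_nonneg hnb _
    nlinarith [e1, e2, mul_nonneg (mul_nonneg (by linarith : (0:ℝ) ≤ r - 1) (add_nonneg h2 h3)) (by linarith : (0:ℝ) ≤ a - b)]
  -- symmetry helper
  have hsymm : ∀ a b : ℝ, |sgp r a - sgp r b| = |sgp r b - sgp r a| := fun a b => abs_sub_comm _ _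
  have hnn : ∀ a b : ℝ, 0 ≤ a → 0 ≤ b →
      |sgp r a - sgp r b| ≤ r * (|a| ^ (r - 1) + |b| ^ (r - 1)) * |a - b| := by
    intro a b ha hb
    rcases le_total b a with h | h
    · exact honn a b hb h
    · rw [hsymm, abs_sub_comm a b, add_comm (|a| ^ (r-1))]; exact honn b a ha h
  rcases le_total 0 a with ha | ha <;> rcases le_total 0 b with hb | hb
  · exact hnn a b ha hb
  · exact hmx a b ha hb
  · rw [hsymm, abs_sub_comm a b, add_comm (|a| ^ (r-1))]; exact hmx b a hb ha
  · have := hnn (-a) (-b) (by linarith) (by linarith)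
    rwa [sgp_neg, sgp_neg, show -sgp r a - -sgp r b = -(sgp r a - sgp r b) by ring, abs_neg,
        abs_neg, abs_neg, show -a - -b = -(a - b) by ring, abs_neg] at this

lemma real_rpow_add_le (r : ℝ) (hr0 : 0 ≤ r) (hr : r ≤ 1) {a b : ℝ} (ha : 0 ≤ a) (hb : 0 ≤ b) :
    (a + b) ^ r ≤ a ^ r + b ^ r := by
  have := NNReal.rpow_add_le_add_rpow (a.toNNReal) (b.toNNReal) hr0 hr
  have h2 : ((a.toNNReal + b.toNNReal : ℝ≥0) : ℝ) = a + b := by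
    simp [Real.coe_toNNReal _ ha, Real.coe_toNNReal _ hb]
  calc (a + b) ^ r = ((a.toNNReal + b.toNNReal : ℝ≥0) : ℝ) ^ r := by rw [h2]
    _ = (((a.toNNReal + b.toNNReal) ^ r : ℝ≥0) : ℝ) := by rw [NNReal.coe_rpow]
    _ ≤ ((a.toNNReal ^ r + b.toNNReal ^ r : ℝ≥0) : ℝ) := by exact_mod_cast this
    _ = a ^ r + b ^ r := by
        push_cast [NNReal.coe_rpow, Real.coe_toNNReal _ ha, Real.coe_toNNReal _ hb]; ring

lemma sgp_diff_le_of_le_one (r : ℝ) (hr0 : 0 < r) (hr : r ≤ 1) (a b : ℝ) :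
    |sgp r a - sgp r b| ≤ 2 * |a - b| ^ r := by
  have hord : ∀ a b : ℝ, 0 ≤ b → b ≤ a → a ^ r - b ^ r ≤ (a - b) ^ r := by
    intro a b hb hba
    have := real_rpow_add_le r hr0.le hr (by linarith : (0:ℝ) ≤ a - b) hb
    rw [sub_add_cancel] at this
    linarith
  have honn : ∀ a b : ℝ, 0 ≤ b → b ≤ a →
      |sgp r a - sgp r b| ≤ 2 * |a - b| ^ r := by
    intro a b hb hba
    have ha : 0 ≤ a := hb.trans hba
    rw [sgp_of_nonneg ha hr0, sgp_of_nonneg hb hr0,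
      abs_of_nonneg (by linarith [Real.rpow_le_rpow hb hba hr0.le] : (0:ℝ) ≤ a ^ r - b ^ r),
      abs_of_nonneg (by linarith : (0:ℝ) ≤ a - b)]
    have h2 : (0:ℝ) ≤ (a - b) ^ r := Real.rpow_nonneg (by linarith) r
    linarith [hord a b hb hba]
  have hmx : ∀ a b : ℝ, 0 ≤ a → b ≤ 0 →
      |sgp r a - sgp r b| ≤ 2 * |a - b| ^ r := by
    intro a b ha hb
    have hnb : 0 ≤ -b := by linarith
    have h1 : sgp r b = -((-b) ^ r) := by
      rw [show b = -(-b) by ring, sgp_neg, sgp_of_nonneg hnb hr0]; ring_nf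
    rw [sgp_of_nonneg ha hr0, h1, sub_neg_eq_add,
      abs_of_nonneg (by positivity : (0:ℝ) ≤ a ^ r + (-b) ^ r),
      abs_of_nonneg (by linarith : (0:ℝ) ≤ a - b)]
    have e1 : a ^ r ≤ (a - b) ^ r := Real.rpow_le_rpow ha (by linarith) hr0.le
    have e2 : (-b) ^ r ≤ (a - b) ^ r := Real.rpow_le_rpow hnb (by linarith) hr0.le
    linarith
  have hsymm : ∀ a b : ℝ, |sgp r a - sgp r b| = |sgp r b - sgp r a| := fun a b => abs_sub_comm _ _
  have hnn : ∀ a b : ℝ, 0 ≤ a → 0 ≤ b →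
      |sgp r a - sgp r b| ≤ 2 * |a - b| ^ r := by
    intro a b ha hb
    rcases le_total b a with h | h
    · exact honn a b hb h
    · rw [hsymm, abs_sub_comm a b]; exact honn b a ha h
  rcases le_total 0 a with ha | ha <;> rcases le_total 0 b with hb | hb
  · exact hnn a b ha hb
  · exact hmx a b ha hb
  · rw [hsymm, abs_sub_comm a b]; exact hmx b a hb ha
  · have := hnn (-a) (-b) (by linarith) (by linarith)
    rwa [sgp_neg, sgp_neg, show -sgp r a - -sgp r b = -(sgp r a - sgp r b) by ring, abs_neg,
      show -a - -b = -(a - b) by ring, abs_neg] at this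

lemma sgp_one (a : ℝ) : sgp 1 a = a := by
  rcases lt_trichotomy a 0 with h | h | h
  · rw [sgp, Real.rpow_one, Real.sign_of_neg h, abs_of_neg h]; ring
  · simp [h, sgp, Real.sign_zero]
  · rw [sgp, Real.rpow_one, Real.sign_of_pos h, abs_of_pos h]; ring

lemma sgp_mul_pos (r u v : ℝ) (hu : 0 < u) (hr : 0 < r) : sgp r (u * v) = u ^ r * sgp r v := by
  rcases lt_trichotomy v 0 with h | h | h
  · rw [sgp, sgp, Real.sign_of_neg h, Real.sign_of_neg (mul_neg_of_pos_of_neg hu h),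
      abs_mul, abs_of_pos hu, Real.mul_rpow hu.le (abs_nonneg v)]
    ring
  · simp [h, sgp, Real.sign_zero]
  · rw [sgp, sgp, Real.sign_of_pos h, Real.sign_of_pos (mul_pos hu h),
      abs_mul, abs_of_pos hu, Real.mul_rpow hu.le (abs_nonneg v)]
    ring

lemma sgp_sgp (r r' a : ℝ) (hr : 0 < r) (hr' : 0 < r') : sgp r' (sgp r a) = sgp (r * r') a := by
  rcases lt_trichotomy a 0 with h | h | h
  · have habs : (0:ℝ) < |a| ^ r := Real.rpow_pos_of_pos (abs_pos.mpr h.ne) r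
    rw [show sgp r a = -1 * |a| ^ r from by rw [sgp, Real.sign_of_neg h],
      show (-1 : ℝ) * |a| ^ r = |a| ^ r * (-1) from by ring,
      sgp_mul_pos r' _ _ habs hr', show sgp r' (-1 : ℝ) = -1 from by
        rw [show (-1 : ℝ) = -(1:ℝ) from rfl, sgp, Real.sign_of_neg (by norm_num : (-1:ℝ) < 0)]
        simp,
      sgp, Real.sign_of_neg h, abs_of_neg h, ← Real.rpow_mul (by linarith : (0:ℝ) ≤ -a)]
    ring
  · rw [h, sgp_zero, sgp_zero, sgp_zero]
  · have habs : (0:ℝ) < |a| ^ r := Real.rpow_pos_of_pos (abs_pos.mpr h.ne') r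
    rw [show sgp r a = |a| ^ r from by rw [sgp, Real.sign_of_pos h, one_mul],
      show sgp r' (|a| ^ r) = (|a| ^ r) ^ r' from by
        rw [sgp, Real.sign_of_pos habs, one_mul, abs_of_pos habs],
      sgp, Real.sign_of_pos h, ← Real.rpow_mul (abs_nonneg a)]
    ring

lemma toReal_ofReal' (p : ℝ) (hp : 1 ≤ p) : (ENNReal.ofReal p).toReal = p :=
  ENNReal.toReal_ofReal (by linarith)

lemma ofReal_pos' (p : ℝ) (hp : 1 ≤ p) : 0 < (ENNReal.ofReal p).toReal := by
  rw [toReal_ofReal' p hp]; linarith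

lemma abs_sgp_rpow (p q : ℝ) (hp : 1 ≤ p) (hq : 1 ≤ q) (a : ℝ) :
    (|sgp (p/q) a|) ^ q = |a| ^ p := by
  have hq0 : (0:ℝ) < q := by linarith
  have hr : (0:ℝ) < p / q := div_pos (by linarith) hq0
  rw [abs_sgp _ _ hr, ← Real.rpow_mul (abs_nonneg a), div_mul_cancel₀ p hq0.ne']

lemma memℓp_mzS (p q : ℝ) (hp : 1 ≤ p) (hq : 1 ≤ q)
    (x : lp (fun _ : ℕ => ℝ) (ENNReal.ofReal p)) :
    Memℓp (fun i => sgp (p/q) (x i)) (ENNReal.ofReal q) := by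
  apply memℓp_gen
  have h : ∀ i : ℕ, ‖sgp (p/q) (x i)‖ ^ (ENNReal.ofReal q).toReal
      = ‖x i‖ ^ (ENNReal.ofReal p).toReal := by
    intro i
    rw [toReal_ofReal' p hp, toReal_ofReal' q hq, Real.norm_eq_abs, Real.norm_eq_abs,
      abs_sgp_rpow p q hp hq]
  simpa only [h] using (lp.memℓp x).summable (ofReal_pos' p hp)

noncomputable def mzS (p q : ℝ) (hp : 1 ≤ p) (hq : 1 ≤ q)
    (x : lp (fun _ : ℕ => ℝ) (ENNReal.ofReal p)) :
    lp (fun _ : ℕ => ℝ) (ENNReal.ofReal q) :=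
  ⟨fun i => sgp (p/q) (x i), memℓp_mzS p q hp hq x⟩

lemma mzS_apply (p q : ℝ) (hp : 1 ≤ p) (hq : 1 ≤ q)
    (x : lp (fun _ : ℕ => ℝ) (ENNReal.ofReal p)) (i : ℕ) :
    mzS p q hp hq x i = sgp (p/q) (x i) := rfl

lemma norm_mzS (p q : ℝ) (hp : 1 ≤ p) (hq : 1 ≤ q)
    (x : lp (fun _ : ℕ => ℝ) (ENNReal.ofReal p)) :
    ‖mzS p q hp hq x‖ = ‖x‖ ^ (p / q) := by
  have hq0 : (0:ℝ) < q := by linarith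
  rw [lp.norm_eq_tsum_rpow (ofReal_pos' q hq) (mzS p q hp hq x)]
  have h : ∀ i : ℕ, ‖mzS p q hp hq x i‖ ^ (ENNReal.ofReal q).toReal
      = ‖x i‖ ^ (ENNReal.ofReal p).toReal := by
    intro i
    rw [mzS_apply, toReal_ofReal' p hp, toReal_ofReal' q hq, Real.norm_eq_abs, Real.norm_eq_abs,
      abs_sgp_rpow p q hp hq]
  rw [tsum_congr h, ← lp.norm_rpow_eq_tsum (ofReal_pos' p hp) x, toReal_ofReal' q hq,
    toReal_ofReal' p hp, ← Real.rpow_mul (lp.norm_nonneg' x) p (1/q), mul_one_div]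

noncomputable def mz (p q : ℝ) (hp : 1 ≤ p) (hq : 1 ≤ q)
    (x : lp (fun _ : ℕ => ℝ) (ENNReal.ofReal p)) :
    lp (fun _ : ℕ => ℝ) (ENNReal.ofReal q) :=
  ‖x‖ ^ (1 - p / q) • mzS p q hp hq x

lemma mz_apply (p q : ℝ) (hp : 1 ≤ p) (hq : 1 ≤ q)
    (x : lp (fun _ : ℕ => ℝ) (ENNReal.ofReal p)) (i : ℕ) :
    mz p q hp hq x i = ‖x‖ ^ (1 - p / q) * sgp (p/q) (x i) := by
  rw [mz]
  have := lp.coeFn_smul (‖x‖ ^ (1 - p / q)) (mzS p q hp hq x)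
  rw [show ((‖x‖ ^ (1 - p / q) • mzS p q hp hq x :
      lp (fun _ : ℕ => ℝ) (ENNReal.ofReal q)) : ∀ _ : ℕ, ℝ) i
      = (‖x‖ ^ (1 - p / q) • (mzS p q hp hq x : ∀ _ : ℕ, ℝ)) i from congrFun this i]
  simp [mzS_apply]

lemma mzS_zero (p q : ℝ) (hp : 1 ≤ p) (hq : 1 ≤ q) : mzS p q hp hq 0 = 0 := by
  apply lp.ext
  funext i
  have h0 : ((0 : lp (fun _ : ℕ => ℝ) (ENNReal.ofReal p)) : ∀ _ : ℕ, ℝ) i = 0 := by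
    rw [lp.coeFn_zero]; rfl
  show sgp (p/q) (((0 : lp (fun _ : ℕ => ℝ) (ENNReal.ofReal p)) : ∀ _ : ℕ, ℝ) i) = _
  rw [h0, sgp_zero, lp.coeFn_zero]
  rfl

lemma mz_zero (p q : ℝ) (hp : 1 ≤ p) (hq : 1 ≤ q) : mz p q hp hq 0 = 0 := by
  rw [mz, mzS_zero, smul_zero]

lemma norm_pos_of_ne_zero {p : ℝ≥0∞} {x : lp (fun _ : ℕ => ℝ) p} (hx : x ≠ 0) : 0 < ‖x‖ := by
  rcases lt_or_eq_of_le (lp.norm_nonneg' x) with h | h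
  · exact h
  · exact absurd (lp.norm_eq_zero_iff.mp h.symm) hx

lemma ofReal_ne_zero' (q : ℝ) (hq : 1 ≤ q) : ENNReal.ofReal q ≠ 0 := by
  simp only [ne_eq, ENNReal.ofReal_eq_zero, not_le]; linarith

lemma norm_mz (p q : ℝ) (hp : 1 ≤ p) (hq : 1 ≤ q)
    (x : lp (fun _ : ℕ => ℝ) (ENNReal.ofReal p)) : ‖mz p q hp hq x‖ = ‖x‖ := by
  rcases eq_or_ne x 0 with rfl | hx
  · rw [mz_zero, lp.norm_zero, lp.norm_zero]
  · have hxn : 0 < ‖x‖ := norm_pos_of_ne_zero hx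
    rw [mz, lp.norm_const_smul (ofReal_ne_zero' q hq),
      norm_mzS p q hp hq, Real.norm_eq_abs, abs_of_nonneg (Real.rpow_nonneg (lp.norm_nonneg' x) (1 - p/q)),
      ← Real.rpow_add hxn]
    simp

lemma mz_coord_inv (p q : ℝ) (hp : 1 ≤ p) (hq : 1 ≤ q) (c : ℝ) (hc : 0 < c) (a : ℝ) :
    c ^ (1 - q/p) * sgp (q/p) (c ^ (1 - p/q) * sgp (p/q) a) = a := by
  have hp0 : (0:ℝ) < p := by linarith
  have hq0 : (0:ℝ) < q := by linarith
  have hr : (0:ℝ) < p / q := div_pos hp0 hq0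
  have hr' : (0:ℝ) < q / p := div_pos hq0 hp0
  have ht : (0:ℝ) < c ^ (1 - p/q) := Real.rpow_pos_of_pos hc _
  rw [sgp_mul_pos _ _ _ ht hr', sgp_sgp _ _ _ hr hr',
    div_mul_div_comm, mul_comm p q, div_self (by positivity : q * p ≠ 0), sgp_one,
    ← Real.rpow_mul hc.le (1 - p/q) (q/p), ← mul_assoc, ← Real.rpow_add hc]
  have : 1 - q / p + (1 - p / q) * (q / p) = 0 := by field_simp; ring
  rw [this, Real.rpow_zero, one_mul]

lemma mz_mz (p q : ℝ) (hp : 1 ≤ p) (hq : 1 ≤ q)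
    (x : lp (fun _ : ℕ => ℝ) (ENNReal.ofReal p)) :
    mz q p hq hp (mz p q hp hq x) = x := by
  rcases eq_or_ne x 0 with rfl | hx
  · rw [mz_zero, mz_zero]
  · have hxn : 0 < ‖x‖ := norm_pos_of_ne_zero hx
    apply lp.ext
    funext i
    show mz q p hq hp (mz p q hp hq x) i = x i
    rw [mz_apply q p hq hp, mz_apply p q hp hq, norm_mz p q hp hq]
    exact mz_coord_inv p q hp hq ‖x‖ hxn (x i)

lemma mz_smul (p q : ℝ) (hp : 1 ≤ p) (hq : 1 ≤ q) (c : ℝ) (hc : 0 ≤ c)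
    (x : lp (fun _ : ℕ => ℝ) (ENNReal.ofReal p)) :
    mz p q hp hq (c • x) = c • mz p q hp hq x := by
  rcases eq_or_lt_of_le hc with rfl | hc
  · rw [zero_smul, zero_smul, mz_zero]
  · apply lp.ext
    funext i
    have hcoord : ((c • x : lp (fun _ : ℕ => ℝ) (ENNReal.ofReal p)) : ∀ _ : ℕ, ℝ) i = c * x i := by
      rw [lp.coeFn_smul]; rfl
    have hr : (0:ℝ) < p / q := div_pos (by linarith) (by linarith)
    show mz p q hp hq (c • x) i = (c • mz p q hp hq x : lp (fun _ : ℕ => ℝ) (ENNReal.ofReal q)) i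
    rw [show ((c • mz p q hp hq x : lp (fun _ : ℕ => ℝ) (ENNReal.ofReal q)) : ∀ _ : ℕ, ℝ) i
        = c * (mz p q hp hq x i) from by rw [lp.coeFn_smul]; rfl]
    rw [mz_apply p q hp hq, mz_apply p q hp hq, hcoord, sgp_mul_pos _ _ _ hc hr,
      lp.norm_const_smul (ofReal_ne_zero' p hp), Real.norm_eq_abs, abs_of_pos hc,
      Real.mul_rpow hc.le (lp.norm_nonneg' x)]
    rw [show c ^ (1 - p/q) * ‖x‖ ^ (1 - p/q) * (c ^ (p/q) * sgp (p/q) (x i))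
        = (c ^ (1 - p/q) * c ^ (p/q)) * (‖x‖ ^ (1 - p/q) * sgp (p/q) (x i)) from by ring,
      ← Real.rpow_add hc]
    norm_num

lemma coe_sub_apply (p : ℝ≥0∞) (x y : lp (fun _ : ℕ => ℝ) p) (i : ℕ) :
    (x - y : lp (fun _ : ℕ => ℝ) p) i = x i - y i := by
  rw [lp.coeFn_sub]; rfl

lemma norm_mzS_sub_le_of_le (p q : ℝ) (hp : 1 ≤ p) (hq : 1 ≤ q) (hpq : p ≤ q)
    (x y : lp (fun _ : ℕ => ℝ) (ENNReal.ofReal p)) :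
    ‖mzS p q hp hq x - mzS p q hp hq y‖ ≤ 2 * ‖x - y‖ ^ (p / q) := by
  have hq0 : (0:ℝ) < q := by linarith
  have hp0 : (0:ℝ) < p := by linarith
  have hr0 : (0:ℝ) < p / q := div_pos hp0 hq0
  have hr1 : p / q ≤ 1 := (div_le_one hq0).mpr hpq
  set D := mzS p q hp hq x - mzS p q hp hq y with hD
  have key : ∀ i : ℕ, ‖D i‖ ^ q ≤ 2 ^ q * ‖(x - y : lp (fun _ : ℕ => ℝ) (ENNReal.ofReal p)) i‖ ^ p := by
    intro i
    rw [coe_sub_apply, Real.norm_eq_abs, Real.norm_eq_abs, coe_sub_apply, mzS_apply, mzS_apply]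
    calc |sgp (p/q) (x i) - sgp (p/q) (y i)| ^ q
        ≤ (2 * |x i - y i| ^ (p/q)) ^ q := by
          apply Real.rpow_le_rpow (abs_nonneg _) (sgp_diff_le_of_le_one _ hr0 hr1 _ _) hq0.le
      _ = 2 ^ q * |x i - y i| ^ p := by
          rw [Real.mul_rpow (by norm_num) (Real.rpow_nonneg (abs_nonneg _) _),
            ← Real.rpow_mul (abs_nonneg _), div_mul_cancel₀ p hq0.ne']
  have hsumL : Summable fun i => ‖D i‖ ^ q := by
    have := (lp.memℓp D).summable (ofReal_pos' q hq)
    rwa [toReal_ofReal' q hq] at this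
  have hsumR : Summable fun i => 2 ^ q * ‖(x - y : lp (fun _ : ℕ => ℝ) (ENNReal.ofReal p)) i‖ ^ p := by
    apply Summable.mul_left
    have := (lp.memℓp (x - y)).summable (ofReal_pos' p hp)
    rwa [toReal_ofReal' p hp] at this
  have hDq : ‖D‖ ^ q ≤ (2 * ‖x - y‖ ^ (p / q)) ^ q := by
    have h1 : ‖D‖ ^ q = ∑' i, ‖D i‖ ^ q := by
      have := lp.norm_rpow_eq_tsum (ofReal_pos' q hq) D
      rwa [toReal_ofReal' q hq] at this
    have h2 : ∑' i, ‖D i‖ ^ q ≤ ∑' i, 2 ^ q * ‖(x - y : lp (fun _ : ℕ => ℝ) (ENNReal.ofReal p)) i‖ ^ p :=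
      Summable.tsum_le_tsum key hsumL hsumR
    have h3 : ∑' i, (2:ℝ) ^ q * ‖(x - y : lp (fun _ : ℕ => ℝ) (ENNReal.ofReal p)) i‖ ^ p
        = 2 ^ q * ‖x - y‖ ^ p := by
      rw [tsum_mul_left]
      congr 1
      have := lp.norm_rpow_eq_tsum (ofReal_pos' p hp) (x - y)
      rw [toReal_ofReal' p hp] at this
      rw [← this]
    have h4 : (2 * ‖x - y‖ ^ (p / q)) ^ q = 2 ^ q * ‖x - y‖ ^ p := by
      rw [Real.mul_rpow (by norm_num) (Real.rpow_nonneg (lp.norm_nonneg' _) _),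
        ← Real.rpow_mul (lp.norm_nonneg' _), div_mul_cancel₀ p hq0.ne']
    rw [h1, h4]
    linarith
  have h5 : (0:ℝ) ≤ 2 * ‖x - y‖ ^ (p / q) := by
    have := Real.rpow_nonneg (lp.norm_nonneg' (x - y)) (p/q); linarith
  exact (Real.rpow_le_rpow_iff (lp.norm_nonneg' D) h5 hq0).mp hDq

lemma add_rpow_le_two_rpow (A B t : ℝ) (hA : 0 ≤ A) (hB : 0 ≤ B) (ht : 0 ≤ t) :
    (A + B) ^ t ≤ 2 ^ t * (A ^ t + B ^ t) := by
  have h1 : A + B ≤ 2 * max A B := by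
    rcases le_total A B with h | h
    · have := max_eq_right h; rw [this]; linarith
    · have := max_eq_left h; rw [this]; linarith
  have h2 : (A + B) ^ t ≤ (2 * max A B) ^ t :=
    Real.rpow_le_rpow (by linarith) h1 ht
  have h3 : (2 * max A B) ^ t = 2 ^ t * (max A B) ^ t :=
    Real.mul_rpow (by norm_num) (le_max_iff.mpr (Or.inl hA))
  have h4 : (max A B) ^ t ≤ A ^ t + B ^ t := by
    rcases le_total A B with h | h
    · rw [max_eq_right h]
      have := Real.rpow_nonneg hA t; linarith
    · rw [max_eq_left h]
      have := Real.rpow_nonneg hB t; linarith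
  have h5 : (0:ℝ) ≤ (2:ℝ) ^ t := Real.rpow_nonneg (by norm_num) t
  calc (A + B) ^ t ≤ 2 ^ t * (max A B) ^ t := by rw [← h3]; exact h2
    _ ≤ 2 ^ t * (A ^ t + B ^ t) := by nlinarith

lemma norm_mzS_sub_le_of_gt (p q : ℝ) (hp : 1 ≤ p) (hq : 1 ≤ q) (hqp : q < p)
    (K : ℝ) (hK : 0 < K) :
    ∃ L : ℝ, 0 ≤ L ∧ ∀ x y : lp (fun _ : ℕ => ℝ) (ENNReal.ofReal p), ‖x‖ ≤ K → ‖y‖ ≤ K →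
      ‖mzS p q hp hq x - mzS p q hp hq y‖ ≤ L * ‖x - y‖ := by
  have hq0 : (0:ℝ) < q := by linarith
  have hp0 : (0:ℝ) < p := by linarith
  set r : ℝ := p / q with hrdef
  have hr1 : 1 < r := (one_lt_div hq0).mpr hqp
  set u : ℝ := p / q with hudef
  set v : ℝ := p / (p - q) with hvdef
  have hpq' : (0:ℝ) < p - q := by linarith
  have hconj : u.HolderConjugate v := by
    refine Real.holderConjugate_iff.mpr ⟨?_, ?_⟩
    · exact hr1
    · rw [hudef, hvdef]
      rw [inv_div, inv_div]
      field_simp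
      ring
  have hqv : q * v = q * p / (p - q) := by rw [hvdef]; ring
  -- the constant
  set G : ℝ := 2 ^ (q * v) * (2 * K ^ p) with hGdef
  have hG0 : 0 < G := by
    have h1 : (0:ℝ) < 2 ^ (q*v) := Real.rpow_pos_of_pos (by norm_num) _
    have h2 : (0:ℝ) < K ^ p := Real.rpow_pos_of_pos hK _
    positivity
  refine ⟨r * G ^ (1 / (v * q)), by positivity, ?_⟩
  intro x y hx hy
  set D := mzS p q hp hq x - mzS p q hp hq y with hD
  set f : ℕ → ℝ := fun i => |x i - y i| ^ q with hf
  set g : ℕ → ℝ := fun i => (|x i| ^ (r - 1) + |y i| ^ (r - 1)) ^ q with hg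
  have hfnn : ∀ i, 0 ≤ f i := fun i => Real.rpow_nonneg (abs_nonneg _) _
  have hgnn : ∀ i, 0 ≤ g i := fun i => Real.rpow_nonneg
    (add_nonneg (Real.rpow_nonneg (abs_nonneg _) _) (Real.rpow_nonneg (abs_nonneg _) _)) _
  have hv0 : (0:ℝ) < v := div_pos hp0 hpq'
  -- summability of f ^ u
  have hxy_sum : Summable fun i => ‖(x - y : lp (fun _ : ℕ => ℝ) (ENNReal.ofReal p)) i‖ ^ p := by
    have := (lp.memℓp (x - y)).summable (ofReal_pos' p hp)
    rwa [toReal_ofReal' p hp] at this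
  have hfu : ∀ i, f i ^ u = |x i - y i| ^ p := by
    intro i
    rw [hf, ← Real.rpow_mul (abs_nonneg _), hudef]
    congr 1
    field_simp
  have hfusum : Summable fun i => f i ^ u := by
    apply hxy_sum.congr
    intro i
    rw [hfu i, coe_sub_apply, Real.norm_eq_abs]
  -- summability of g ^ v and bound
  have hxsum : Summable fun i => ‖x i‖ ^ p := by
    have := (lp.memℓp x).summable (ofReal_pos' p hp)
    rwa [toReal_ofReal' p hp] at this
  have hysum : Summable fun i => ‖y i‖ ^ p := by
    have := (lp.memℓp y).summable (ofReal_pos' p hp)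
    rwa [toReal_ofReal' p hp] at this
  have hexp : (r - 1) * (q * v) = p := by
    have e1 : r * q = p := div_mul_cancel₀ p hq0.ne'
    have e2 : (p - q) * v = p := by
      rw [hvdef]; field_simp
    linear_combination v * e1 + e2
  have hgv_le : ∀ i, g i ^ v ≤ 2 ^ (q*v) * (|x i| ^ p + |y i| ^ p) := by
    intro i
    rw [hg, ← Real.rpow_mul (add_nonneg (Real.rpow_nonneg (abs_nonneg _) _)
      (Real.rpow_nonneg (abs_nonneg _) _))]
    calc (|x i| ^ (r-1) + |y i| ^ (r-1)) ^ (q * v)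
        ≤ 2 ^ (q*v) * ((|x i| ^ (r-1)) ^ (q*v) + (|y i| ^ (r-1)) ^ (q*v)) :=
          add_rpow_le_two_rpow _ _ _ (Real.rpow_nonneg (abs_nonneg _) _)
            (Real.rpow_nonneg (abs_nonneg _) _) (by positivity)
      _ = 2 ^ (q*v) * (|x i| ^ p + |y i| ^ p) := by
          rw [← Real.rpow_mul (abs_nonneg _), ← Real.rpow_mul (abs_nonneg _), hexp]
  have hgvsum : Summable fun i => g i ^ v := by
    apply Summable.of_nonneg_of_le (fun i => Real.rpow_nonneg (hgnn i) _) hgv_le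
    apply Summable.mul_left
    apply Summable.add
    · exact hxsum.congr fun i => by rw [Real.norm_eq_abs]
    · exact hysum.congr fun i => by rw [Real.norm_eq_abs]
  obtain ⟨hmulsum, hholder⟩ :=
    summable_and_inner_le_Lp_mul_Lq_tsum_of_nonneg hconj hfnn hgnn hfusum hgvsum
  -- pointwise bound on D
  have key : ∀ i : ℕ, ‖D i‖ ^ q ≤ r ^ q * (f i * g i) := by
    intro i
    rw [hD, coe_sub_apply, Real.norm_eq_abs, mzS_apply, mzS_apply]
    calc |sgp (p/q) (x i) - sgp (p/q) (y i)| ^ q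
        ≤ (r * (|x i| ^ (r-1) + |y i| ^ (r-1)) * |x i - y i|) ^ q := by
          apply Real.rpow_le_rpow (abs_nonneg _) ?_ hq0.le
          exact sgp_diff_le r (le_of_lt hr1) (x i) (y i)
      _ = r ^ q * (f i * g i) := by
          rw [Real.mul_rpow (by positivity) (abs_nonneg _),
            Real.mul_rpow (by linarith : (0:ℝ) ≤ r) (by positivity)]
          rw [hf, hg]
          ring
  -- sum up
  have hsumL : Summable fun i => ‖D i‖ ^ q := by
    have := (lp.memℓp D).summable (ofReal_pos' q hq)
    rwa [toReal_ofReal' q hq] at this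
  have h1 : ‖D‖ ^ q = ∑' i, ‖D i‖ ^ q := by
    have := lp.norm_rpow_eq_tsum (ofReal_pos' q hq) D
    rwa [toReal_ofReal' q hq] at this
  have h2 : ∑' i, ‖D i‖ ^ q ≤ ∑' i, r ^ q * (f i * g i) :=
    Summable.tsum_le_tsum key hsumL (hmulsum.mul_left _)
  have h3 : ∑' i, r ^ q * (f i * g i) = r ^ q * ∑' i, f i * g i := tsum_mul_left
  -- compute the two tsums
  have hfu_eq : ∑' i, f i ^ u = ‖x - y‖ ^ p := by
    rw [tsum_congr hfu]
    have := lp.norm_rpow_eq_tsum (ofReal_pos' p hp) (x - y)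
    rw [toReal_ofReal' p hp] at this
    rw [this]
    exact tsum_congr fun i => by rw [coe_sub_apply, Real.norm_eq_abs]
  have hgv_bound : ∑' i, g i ^ v ≤ G := by
    have hb : ∑' i, g i ^ v ≤ ∑' i, 2 ^ (q*v) * (|x i| ^ p + |y i| ^ p) := by
      apply Summable.tsum_le_tsum hgv_le hgvsum
      apply Summable.mul_left
      apply Summable.add
      · exact hxsum.congr fun i => by rw [Real.norm_eq_abs]
      · exact hysum.congr fun i => by rw [Real.norm_eq_abs]
    have hc : ∑' i, (2:ℝ) ^ (q*v) * (|x i| ^ p + |y i| ^ p)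
        = 2 ^ (q*v) * (‖x‖ ^ p + ‖y‖ ^ p) := by
      rw [tsum_mul_left]
      congr 1
      rw [Summable.tsum_add (hxsum.congr fun i => by rw [Real.norm_eq_abs])
        (hysum.congr fun i => by rw [Real.norm_eq_abs])]
      have e1 := lp.norm_rpow_eq_tsum (ofReal_pos' p hp) x
      have e2 := lp.norm_rpow_eq_tsum (ofReal_pos' p hp) y
      rw [toReal_ofReal' p hp] at e1 e2
      rw [e1, e2]
      congr 1 <;> exact tsum_congr fun i => by rw [Real.norm_eq_abs]
    have hd : ‖x‖ ^ p + ‖y‖ ^ p ≤ 2 * K ^ p := by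
      have e1 : ‖x‖ ^ p ≤ K ^ p := Real.rpow_le_rpow (lp.norm_nonneg' x) hx hp0.le
      have e2 : ‖y‖ ^ p ≤ K ^ p := Real.rpow_le_rpow (lp.norm_nonneg' y) hy hp0.le
      linarith
    have h2qv : (0:ℝ) ≤ 2 ^ (q*v) := Real.rpow_nonneg (by norm_num) _
    calc ∑' i, g i ^ v ≤ 2 ^ (q*v) * (‖x‖ ^ p + ‖y‖ ^ p) := by rw [← hc]; exact hb
      _ ≤ 2 ^ (q*v) * (2 * K ^ p) := by nlinarith
  -- assemble
  have hDq : ‖D‖ ^ q ≤ (r * G ^ (1 / (v * q)) * ‖x - y‖) ^ q := by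
    have hxynn : (0:ℝ) ≤ ‖x - y‖ := lp.norm_nonneg' _
    have step : ∑' i, f i * g i ≤ (‖x - y‖ ^ p) ^ (1/u) * G ^ (1/v) := by
      calc ∑' i, f i * g i ≤ (∑' i, f i ^ u) ^ (1/u) * (∑' i, g i ^ v) ^ (1/v) := hholder
        _ ≤ (‖x - y‖ ^ p) ^ (1/u) * G ^ (1/v) := by
            rw [hfu_eq]
            apply mul_le_mul_of_nonneg_left
            · exact Real.rpow_le_rpow (tsum_nonneg fun i => Real.rpow_nonneg (hgnn i) _)
                hgv_bound (by positivity)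
            · exact Real.rpow_nonneg (Real.rpow_nonneg hxynn _) _
    have hxq : (‖x - y‖ ^ p) ^ (1/u) = ‖x - y‖ ^ q := by
      rw [← Real.rpow_mul hxynn]
      congr 1
      rw [hudef]
      field_simp
    have hrhs : (r * G ^ (1 / (v * q)) * ‖x - y‖) ^ q
        = r ^ q * (‖x - y‖ ^ q * G ^ (1/v)) := by
      rw [Real.mul_rpow (by positivity) hxynn,
        Real.mul_rpow (by linarith : (0:ℝ) ≤ r) (by positivity),
        ← Real.rpow_mul hG0.le (1 / (v * q)) q,
        show 1 / (v * q) * q = 1 / v from by rw [mul_comm v q]; field_simp]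
      ring
    have hstep2 : r ^ q * ∑' i, f i * g i ≤ r ^ q * (‖x - y‖ ^ q * G ^ (1/v)) := by
      apply mul_le_mul_of_nonneg_left _ (Real.rpow_nonneg (by linarith : (0:ℝ) ≤ r) q)
      rw [← hxq]
      exact step
    rw [h1, hrhs]
    linarith
  have hLnn : (0:ℝ) ≤ r * G ^ (1 / (v * q)) * ‖x - y‖ :=
    mul_nonneg (mul_nonneg (by linarith : (0:ℝ) ≤ r) (Real.rpow_nonneg hG0.le _)) (lp.norm_nonneg' _)
  exact (Real.rpow_le_rpow_iff (lp.norm_nonneg' D) hLnn hq0).mp hDq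

lemma norms_mem_Icc {p : ℝ≥0∞} [Fact (1 ≤ p)] {K : ℝ} {x : lp (fun _ : ℕ => ℝ) p}
    (hx : x ∈ Metric.closedBall 0 K) : ‖x‖ ∈ Set.Icc (0:ℝ) K :=
  ⟨norm_nonneg x, by rwa [Metric.mem_closedBall, dist_zero_right] at hx⟩

lemma mz_uniformContinuousOn (p q : ℝ) (hp : 1 ≤ p) (hq : 1 ≤ q)
    [Fact (1 ≤ ENNReal.ofReal p)] [Fact (1 ≤ ENNReal.ofReal q)] (K : ℝ) (hK : 0 < K) :
    UniformContinuousOn (mz p q hp hq) (Metric.closedBall 0 K) := by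
  have hp0 : (0:ℝ) < p := by linarith
  have hq0 : (0:ℝ) < q := by linarith
  have hr0 : (0:ℝ) < p / q := div_pos hp0 hq0
  rcases lt_trichotomy p q with hpq | rfl | hqp
  · -- p < q : Hölder continuity
    set r : ℝ := p / q with hrdef
    have hr1 : r < 1 := (div_lt_one hq0).mpr hpq
    have hFuc : UniformContinuousOn (fun t : ℝ => t ^ (1 - r)) (Set.Icc 0 K) :=
      isCompact_Icc.uniformContinuousOn_of_continuous (fun t _ =>
        (Real.continuousAt_rpow_const t (1 - r) (Or.inr (by linarith))).continuousWithinAt)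
    rw [Metric.uniformContinuousOn_iff] at hFuc ⊢
    intro ε hε
    have hKr : (0:ℝ) ≤ K ^ r := Real.rpow_nonneg hK.le r
    have hK1r : (0:ℝ) ≤ K ^ (1 - r) := Real.rpow_nonneg hK.le (1 - r)
    set ε₁ : ℝ := ε / (2 * (K ^ r + 1)) with hε₁
    have hε₁0 : 0 < ε₁ := by apply div_pos hε; nlinarith
    set ε₂ : ℝ := ε / (2 * (2 * K ^ (1 - r) + 1)) with hε₂
    have hε₂0 : 0 < ε₂ := by apply div_pos hε; nlinarith
    obtain ⟨δ₁, hδ₁0, hδ₁⟩ := hFuc ε₁ hε₁0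
    refine ⟨min δ₁ (ε₂ ^ (q / p)), lt_min hδ₁0 (Real.rpow_pos_of_pos hε₂0 _), ?_⟩
    intro x hx y hy hd
    have hxK := norms_mem_Icc hx
    have hyK := norms_mem_Icc hy
    rw [dist_eq_norm] at hd ⊢
    have hdec : mz p q hp hq x - mz p q hp hq y
        = ‖x‖ ^ (1 - r) • (mzS p q hp hq x - mzS p q hp hq y)
          + (‖x‖ ^ (1 - r) - ‖y‖ ^ (1 - r)) • mzS p q hp hq y := by
      rw [mz, mz, smul_sub, sub_smul]; abel
    have hb : ‖mz p q hp hq x - mz p q hp hq y‖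
        ≤ ‖x‖ ^ (1 - r) * ‖mzS p q hp hq x - mzS p q hp hq y‖
          + |‖x‖ ^ (1 - r) - ‖y‖ ^ (1 - r)| * ‖mzS p q hp hq y‖ := by
      rw [hdec]
      refine (norm_add_le _ _).trans ?_
      rw [lp.norm_const_smul (ofReal_ne_zero' q hq), lp.norm_const_smul (ofReal_ne_zero' q hq),
        Real.norm_eq_abs, Real.norm_eq_abs, abs_of_nonneg (Real.rpow_nonneg (norm_nonneg x) _)]
    -- term 1
    have ht1 : ‖x‖ ^ (1 - r) * ‖mzS p q hp hq x - mzS p q hp hq y‖ ≤ K ^ (1 - r) * (2 * ε₂) := by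
      have e1 : ‖x‖ ^ (1 - r) ≤ K ^ (1 - r) :=
        Real.rpow_le_rpow (norm_nonneg x) hxK.2 (by linarith)
      have e2 : ‖mzS p q hp hq x - mzS p q hp hq y‖ ≤ 2 * ‖x - y‖ ^ r :=
        norm_mzS_sub_le_of_le p q hp hq (le_of_lt hpq) x y
      have e3 : ‖x - y‖ ^ r ≤ ε₂ := by
        have h4 : ‖x - y‖ ≤ ε₂ ^ (q / p) := le_of_lt (lt_of_lt_of_le hd (min_le_right _ _))
        have h5 : ‖x - y‖ ^ r ≤ (ε₂ ^ (q / p)) ^ r :=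
          Real.rpow_le_rpow (norm_nonneg _) h4 hr0.le
        rwa [← Real.rpow_mul hε₂0.le, show q / p * r = 1 from by
          rw [hrdef]; field_simp, Real.rpow_one] at h5
      have e4 : (0:ℝ) ≤ ‖mzS p q hp hq x - mzS p q hp hq y‖ := norm_nonneg _
      nlinarith [Real.rpow_nonneg (norm_nonneg x) (1 - r)]
    -- term 2
    have ht2 : |‖x‖ ^ (1 - r) - ‖y‖ ^ (1 - r)| * ‖mzS p q hp hq y‖ ≤ ε₁ * K ^ r := by
      have e1 : |‖x‖ ^ (1 - r) - ‖y‖ ^ (1 - r)| < ε₁ := by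
        have := hδ₁ ‖x‖ hxK ‖y‖ hyK (by
          rw [Real.dist_eq]
          exact lt_of_le_of_lt (abs_norm_sub_norm_le x y) (lt_of_lt_of_le hd (min_le_left _ _)))
        rwa [Real.dist_eq] at this
      have e2 : ‖mzS p q hp hq y‖ ≤ K ^ r := by
        rw [norm_mzS p q hp hq]
        exact Real.rpow_le_rpow (norm_nonneg y) hyK.2 hr0.le
      nlinarith [abs_nonneg (‖x‖ ^ (1 - r) - ‖y‖ ^ (1 - r)), norm_nonneg (mzS p q hp hq y)]
    have hfinal1 : K ^ (1 - r) * (2 * ε₂) < ε / 2 := by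
      have hD : (0:ℝ) < 2 * (2 * K ^ (1 - r) + 1) := by nlinarith
      have hshow : K ^ (1-r) * (2 * (ε / (2 * (2 * K ^ (1-r) + 1))))
          = (2 * K ^ (1-r) * ε) / (2 * (2 * K ^ (1-r) + 1)) := by
        field_simp
      rw [hε₂, hshow, div_lt_div_iff₀ hD (by norm_num : (0:ℝ) < 2)]
      nlinarith
    have hfinal2 : ε₁ * K ^ r < ε / 2 := by
      rw [hε₁]
      rw [div_mul_eq_mul_div, div_lt_div_iff₀ (by nlinarith) (by norm_num : (0:ℝ) < 2)]
      nlinarith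
    calc ‖mz p q hp hq x - mz p q hp hq y‖
        ≤ ‖x‖ ^ (1 - r) * ‖mzS p q hp hq x - mzS p q hp hq y‖
          + |‖x‖ ^ (1 - r) - ‖y‖ ^ (1 - r)| * ‖mzS p q hp hq y‖ := hb
      _ ≤ K ^ (1 - r) * (2 * ε₂) + ε₁ * K ^ r := add_le_add ht1 ht2
      _ < ε / 2 + ε / 2 := by linarith
      _ = ε := by ring
  · -- p = q : identity
    have hid : mz p p hp hq = fun x => x := by
      funext x
      apply lp.ext
      funext i
      show mz p p hp hq x i = x i
      rw [mz_apply, div_self hp0.ne', sub_self, Real.rpow_zero, one_mul, sgp_one]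
    rw [hid]
    exact uniformContinuous_id.mono_left inf_le_left
  · -- q < p
    set r : ℝ := p / q with hrdef
    have hr1 : 1 < r := (one_lt_div hq0).mpr hqp
    obtain ⟨L, hL0, hL⟩ := norm_mzS_sub_le_of_gt p q hp hq hqp K hK
    rw [Metric.uniformContinuousOn_iff]
    intro ε hε
    set c : ℝ := ε / 8 with hcdef
    have hc0 : 0 < c := by rw [hcdef]; linarith
    have hFuc : UniformContinuousOn (fun t : ℝ => t ^ (1 - r)) (Set.Icc c K) :=
      isCompact_Icc.uniformContinuousOn_of_continuous (fun t ht =>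
        (Real.continuousAt_rpow_const t (1 - r)
          (Or.inl (ne_of_gt (lt_of_lt_of_le hc0 ht.1)))).continuousWithinAt)
    rw [Metric.uniformContinuousOn_iff] at hFuc
    have hKr : (0:ℝ) ≤ K ^ r := Real.rpow_nonneg hK.le r
    set ε₁ : ℝ := ε / (2 * (K ^ r + 1)) with hε₁
    have hε₁0 : 0 < ε₁ := by apply div_pos hε; nlinarith
    obtain ⟨δ₁, hδ₁0, hδ₁⟩ := hFuc ε₁ hε₁0
    set A : ℝ := c ^ (1 - r) * L with hAdef
    have hA0 : 0 ≤ A := mul_nonneg (Real.rpow_nonneg hc0.le _) hL0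
    set δ₂ : ℝ := ε / (2 * (A + 1)) with hδ₂
    have hδ₂0 : 0 < δ₂ := by apply div_pos hε; nlinarith
    refine ⟨min (min δ₁ δ₂) (ε/8), lt_min (lt_min hδ₁0 hδ₂0) (by linarith), ?_⟩
    intro x hx y hy hd
    have hxK := norms_mem_Icc hx
    have hyK := norms_mem_Icc hy
    rw [dist_eq_norm] at hd ⊢
    have hd8 : ‖x - y‖ < ε / 8 := lt_of_lt_of_le hd (min_le_right _ _)
    have hdδ₁ : ‖x - y‖ < δ₁ := lt_of_lt_of_le hd ((min_le_left _ _).trans (min_le_left _ _))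
    have hdδ₂ : ‖x - y‖ < δ₂ := lt_of_lt_of_le hd ((min_le_left _ _).trans (min_le_right _ _))
    by_cases hsmall : ‖x‖ ≤ ε / 4
    · have hy2 : ‖y‖ ≤ ‖x‖ + ‖x - y‖ := by
        have h := norm_sub_norm_le y x
        rw [norm_sub_rev y x] at h
        linarith
      calc ‖mz p q hp hq x - mz p q hp hq y‖ ≤ ‖mz p q hp hq x‖ + ‖mz p q hp hq y‖ :=
            norm_sub_le _ _
        _ = ‖x‖ + ‖y‖ := by rw [norm_mz p q hp hq, norm_mz p q hp hq]
        _ < ε := by linarith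
    · push_neg at hsmall
      have hxc : c ≤ ‖x‖ := by rw [hcdef]; linarith
      have hyc : c ≤ ‖y‖ := by
        have h := norm_sub_norm_le x y
        rw [hcdef]; linarith
      have hdec : mz p q hp hq x - mz p q hp hq y
          = ‖x‖ ^ (1 - r) • (mzS p q hp hq x - mzS p q hp hq y)
            + (‖x‖ ^ (1 - r) - ‖y‖ ^ (1 - r)) • mzS p q hp hq y := by
        rw [mz, mz, smul_sub, sub_smul]; abel
      have hb : ‖mz p q hp hq x - mz p q hp hq y‖
          ≤ ‖x‖ ^ (1 - r) * ‖mzS p q hp hq x - mzS p q hp hq y‖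
            + |‖x‖ ^ (1 - r) - ‖y‖ ^ (1 - r)| * ‖mzS p q hp hq y‖ := by
        rw [hdec]
        refine (norm_add_le _ _).trans ?_
        rw [lp.norm_const_smul (ofReal_ne_zero' q hq), lp.norm_const_smul (ofReal_ne_zero' q hq),
          Real.norm_eq_abs, Real.norm_eq_abs, abs_of_nonneg (Real.rpow_nonneg (norm_nonneg x) _)]
      have ht1 : ‖x‖ ^ (1 - r) * ‖mzS p q hp hq x - mzS p q hp hq y‖ < ε / 2 := by
        have e1 : ‖x‖ ^ (1 - r) ≤ c ^ (1 - r) :=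
          Real.rpow_le_rpow_of_nonpos hc0 hxc (by linarith)
        have e2 : ‖mzS p q hp hq x - mzS p q hp hq y‖ ≤ L * ‖x - y‖ := hL x y hxK.2 hyK.2
        have e3 : ‖x‖ ^ (1 - r) * ‖mzS p q hp hq x - mzS p q hp hq y‖ ≤ A * ‖x - y‖ := by
          rw [hAdef, mul_assoc]
          apply mul_le_mul e1 e2 (norm_nonneg _) (Real.rpow_nonneg hc0.le _)
        have e4 : A * ‖x - y‖ ≤ A * δ₂ :=
          mul_le_mul_of_nonneg_left hdδ₂.le hA0
        have e5 : A * δ₂ < ε / 2 := by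
          rw [hδ₂]
          have hD : (0:ℝ) < 2 * (A + 1) := by nlinarith
          have hshow : A * (ε / (2 * (A + 1))) = (A * ε) / (2 * (A + 1)) := by
            field_simp
          rw [hshow, div_lt_div_iff₀ hD (by norm_num : (0:ℝ) < 2)]
          nlinarith
        linarith
      have ht2 : |‖x‖ ^ (1 - r) - ‖y‖ ^ (1 - r)| * ‖mzS p q hp hq y‖ < ε / 2 := by
        have e1 : |‖x‖ ^ (1 - r) - ‖y‖ ^ (1 - r)| < ε₁ := by
          have := hδ₁ ‖x‖ ⟨hxc, hxK.2⟩ ‖y‖ ⟨hyc, hyK.2⟩ (by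
            rw [Real.dist_eq]
            exact lt_of_le_of_lt (abs_norm_sub_norm_le x y) hdδ₁)
          rwa [Real.dist_eq] at this
        have e2 : ‖mzS p q hp hq y‖ ≤ K ^ r := by
          rw [norm_mzS p q hp hq]
          exact Real.rpow_le_rpow (norm_nonneg y) hyK.2 (by linarith : (0:ℝ) ≤ p / q)
        have e3 : |‖x‖ ^ (1 - r) - ‖y‖ ^ (1 - r)| * ‖mzS p q hp hq y‖ ≤ ε₁ * K ^ r := by
          apply mul_le_mul e1.le e2 (norm_nonneg _) hε₁0.le
        have e4 : ε₁ * K ^ r < ε / 2 := by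
          rw [hε₁]
          rw [div_mul_eq_mul_div, div_lt_div_iff₀ (by nlinarith : (0:ℝ) < 2 * (K ^ r + 1))
            (by norm_num : (0:ℝ) < 2)]
          nlinarith
        linarith
      linarith [hb, ht1, ht2]

lemma mz_image_ball (p q : ℝ) (hp : 1 ≤ p) (hq : 1 ≤ q)
    [Fact (1 ≤ ENNReal.ofReal p)] [Fact (1 ≤ ENNReal.ofReal q)] (K : ℝ) :
    mz p q hp hq '' Metric.closedBall 0 K = Metric.closedBall 0 K := by
  ext y
  constructor
  · rintro ⟨x, hx, rfl⟩
    rw [mem_closedBall_zero_iff] at *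
    rw [norm_mz p q hp hq]
    exact hx
  · intro hy
    rw [mem_closedBall_zero_iff] at hy
    refine ⟨mz q p hq hp y, ?_, mz_mz q p hq hp y⟩
    rw [mem_closedBall_zero_iff, norm_mz q p hq hp]
    exact hy


/-- The sequence space `ℓ_p`. -/
noncomputable def lpSeq (p : ℝ) (hp : 1 ≤ p) : Type :=
  lp (fun _ : ℕ => ℝ) (ENNReal.ofReal p)

noncomputable instance (p : ℝ) (hp : 1 ≤ p) : NormedAddCommGroup (lpSeq p hp) :=
  haveI : Fact (1 ≤ ENNReal.ofReal p) :=
    ⟨by simpa [ENNReal.ofReal_one] using ENNReal.ofReal_le_ofReal hp⟩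
  inferInstanceAs (NormedAddCommGroup (lp (fun _ : ℕ => ℝ) (ENNReal.ofReal p)))

noncomputable instance (p : ℝ) (hp : 1 ≤ p) : NormedSpace ℝ (lpSeq p hp) :=
  haveI : Fact (1 ≤ ENNReal.ofReal p) :=
    ⟨by simpa [ENNReal.ofReal_one] using ENNReal.ofReal_le_ofReal hp⟩
  inferInstanceAs (NormedSpace ℝ (lp (fun _ : ℕ => ℝ) (ENNReal.ofReal p)))


/-- Coordinates of an element of `ℓ_p`. -/
def lpSeqCoords (p : ℝ) (hp : 1 ≤ p) (x : lpSeq p hp) : ℕ → ℝ :=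
  fun i => (show lp (fun _ : ℕ => ℝ) (ENNReal.ofReal p) from x) i

/-- The Mazur map `φ_{p,q} : ℓ_p → ℓ_q`,
`φ_{p,q}(x) = ‖x‖_p^{1−p/q}·(sign(x_i)|x_i|^{p/q})_i`, is a positively homogeneous,
norm-preserving bijection of the closed `K`-ball of `ℓ_p` onto the closed `K`-ball of
`ℓ_q`, with inverse `φ_{q,p}`, and it is a uniform homeomorphism between these balls. -/
theorem mazur_map_uniform_homeomorphism_of_balls
    (p q : ℝ) (hp : 1 ≤ p) (hq : 1 ≤ q) (K : ℝ) (hK : 0 < K) :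
    ∃ (φ : lpSeq p hp → lpSeq q hq) (ψ : lpSeq q hq → lpSeq p hp),
      (∀ (x : lpSeq p hp) (i : ℕ),
        lpSeqCoords q hq (φ x) i =
          ‖x‖ ^ (1 - p / q) * (Real.sign (lpSeqCoords p hp x i) *
            |lpSeqCoords p hp x i| ^ (p / q))) ∧
      (∀ (y : lpSeq q hq) (i : ℕ),
        lpSeqCoords p hp (ψ y) i =
          ‖y‖ ^ (1 - q / p) * (Real.sign (lpSeqCoords q hq y i) *
            |lpSeqCoords q hq y i| ^ (q / p))) ∧
      (∀ (c : ℝ), 0 ≤ c → ∀ x, φ (c • x) = c • φ x) ∧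
      (∀ x, ‖φ x‖ = ‖x‖) ∧
      (∀ x, ψ (φ x) = x) ∧ (∀ y, φ (ψ y) = y) ∧
      φ '' Metric.closedBall 0 K = Metric.closedBall 0 K ∧
      UniformContinuousOn φ (Metric.closedBall 0 K) ∧
      UniformContinuousOn ψ (Metric.closedBall 0 K) := by
  haveI F1 : Fact (1 ≤ ENNReal.ofReal p) :=
    ⟨by simpa [ENNReal.ofReal_one] using ENNReal.ofReal_le_ofReal hp⟩
  haveI F2 : Fact (1 ≤ ENNReal.ofReal q) :=
    ⟨by simpa [ENNReal.ofReal_one] using ENNReal.ofReal_le_ofReal hq⟩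
  refine ⟨mz p q hp hq, mz q p hq hp, ?_, ?_, ?_, ?_, ?_, ?_, ?_, ?_, ?_⟩
  · exact fun x i => mz_apply p q hp hq x i
  · exact fun y i => mz_apply q p hq hp y i
  · exact fun c hc x => mz_smul p q hp hq c hc x
  · exact fun x => norm_mz p q hp hq x
  · exact fun x => mz_mz p q hp hq x
  · exact fun y => mz_mz q p hq hp y
  · exact mz_image_ball p q hp hq K
  · exact mz_uniformContinuousOn p q hp hq K hK
  · exact mz_uniformContinuousOn q p hq hp K hK
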